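/- Suppose there exists a t-(v,k,1)-design with t ≤ k/2 + 1, and let t0 be a positive integer with t/2 ≤ t0 ≤ t − 1. Then there exists a (K,F,Q,S) placement delivery array with K = b, F = C(v,t0), Q = C(v,t0) − C(k,t0), and S = C(v,t0), where b = C(v,t)/C(k,t). -/
import Mathlib


open Finset

/-- A `(K, F, Q, S)` placement delivery array: an `F × K` array with entries in
`[S] ∪ {*}` (where `none` plays the role of `*`) satisfying conditions C1, C2, C3. -/
def IsPDA {K F S : ℕ} (Q : ℕ) (P : Fin F → Fin K → Option (Fin S)) : Prop :=
  -- C1: the symbol `*` appears exactly `Q` times in each column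
  (∀ k : Fin K, (univ.filter fun j : Fin F => P j k = none).card = Q) ∧
  -- C2: each integer `s ∈ [S]` occurs at least once in the array
  (∀ s : Fin S, ∃ j k, P j k = some s) ∧
  -- C3
  (∀ (j₁ j₂ : Fin F) (k₁ k₂ : Fin K) (s : Fin S), (j₁, k₁) ≠ (j₂, k₂) →
    P j₁ k₁ = some s → P j₂ k₂ = some s →
    j₁ ≠ j₂ ∧ k₁ ≠ k₂ ∧ P j₁ k₂ = none ∧ P j₂ k₁ = none)

/-- There exists a `(K, F, Q, S)` placement delivery array. -/
def ExistsPDA (K F Q S : ℕ) : Prop :=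
  ∃ P : Fin F → Fin K → Option (Fin S), IsPDA Q P

/-- A `t`-`(v,k,1)` design (Steiner system `S(t,k,v)`): `V` is a `v`-set, each block
is a `k`-subset of `V`, and every `t`-subset of `V` lies in exactly one block. -/
def IsSteinerSystem {V : Type} [Fintype V] [DecidableEq V] (B : Finset (Finset V))
    (t v k : ℕ) : Prop :=
  Fintype.card V = v ∧ (∀ blk ∈ B, blk.card = k) ∧
  (∀ T : Finset V, T.card = t → (B.filter fun blk => T ⊆ blk).card = 1)


lemma aux_count_disj {V : Type} [DecidableEq V] (B T : Finset V) (hT : T ⊆ B) (n : ℕ) :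
    ((B.powersetCard n).filter fun T' => Disjoint T T').card = (B.card - T.card).choose n := by
  have h : (B.powersetCard n).filter (fun T' => Disjoint T T') = (B \ T).powersetCard n := by
    ext T'
    simp only [mem_filter, mem_powersetCard, subset_sdiff]
    constructor
    · rintro ⟨⟨h1, h2⟩, h3⟩; exact ⟨⟨h1, h3.symm⟩, h2⟩
    · rintro ⟨⟨h1, h3⟩, h2⟩; exact ⟨⟨h1, h2⟩, h3.symm⟩
  rw [h, card_powersetCard, card_sdiff_of_subset hT]

lemma aux_perm {V : Type} [DecidableEq V] (B : Finset V) (n : ℕ) (h2 : 2 * n ≤ B.card) :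
    ∃ σ : Finset V → Finset V,
      (∀ T ∈ B.powersetCard n, σ T ∈ B.powersetCard n ∧ Disjoint T (σ T)) ∧
      (∀ T₁ ∈ B.powersetCard n, ∀ T₂ ∈ B.powersetCard n, σ T₁ = σ T₂ → T₁ = T₂) ∧
      (∀ T' ∈ B.powersetCard n, ∃ T ∈ B.powersetCard n, σ T = T') := by
  classical
  set D := (B.card - n).choose n with hD
  have hDpos : 0 < D := Nat.choose_pos (by omega)
  set r : {x // x ∈ B.powersetCard n} → Finset (Finset V) :=
    fun T => (B.powersetCard n).filter fun T' => Disjoint T.1 T' with hr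
  have hrcard : ∀ T, (r T).card = D := by
    intro T
    obtain ⟨hsub, hcard⟩ := mem_powersetCard.mp T.2
    rw [hr]; dsimp only
    rw [aux_count_disj B T.1 hsub n, hcard]
  have hall : ∀ A : Finset {x // x ∈ B.powersetCard n}, A.card ≤ (A.biUnion r).card := by
    intro A
    set N := A.biUnion r with hN
    have hsubN : ∀ T ∈ A, r T ⊆ N := fun T hT => subset_biUnion_of_mem r hT
    have hfib : ∀ T' ∈ N, (A.filter fun T => T' ∈ r T).card ≤ D := by
      intro T' hT'
      obtain ⟨T₀, _, hT'0⟩ := mem_biUnion.mp hT'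
      have hT'pc : T' ∈ B.powersetCard n := (mem_filter.mp hT'0).1
      obtain ⟨hT'sub, hT'card⟩ := mem_powersetCard.mp hT'pc
      calc (A.filter fun T => T' ∈ r T).card
          ≤ ((B.powersetCard n).filter fun T'' => Disjoint T' T'').card := by
            apply card_le_card_of_injOn (fun T => T.1)
            · intro T hT
              have := (mem_filter.mp hT).2
              rw [hr] at this; dsimp only at this
              obtain ⟨_, hdisj⟩ := mem_filter.mp this
              exact mem_filter.mpr ⟨T.2, hdisj.symm⟩
            · intro x _ y _ hxy; exact Subtype.ext hxy
        _ = D := by rw [aux_count_disj B T' hT'sub n, hT'card]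
    have hdouble : A.card * D ≤ N.card * D := by
      have h1 : ∑ T ∈ A, (r T).card = A.card * D := by
        rw [Finset.sum_congr rfl fun T _ => hrcard T, Finset.sum_const, smul_eq_mul]
      have h2 : ∑ T ∈ A, (r T).card = ∑ T' ∈ N, (A.filter fun T => T' ∈ r T).card := by
        calc ∑ T ∈ A, (r T).card
            = ∑ T ∈ A, ∑ T' ∈ N, if T' ∈ r T then 1 else 0 := by
              refine Finset.sum_congr rfl fun T hT => ?_
              rw [← Finset.card_filter]
              congr 1
              ext T'
              simp only [mem_filter]
              exact ⟨fun h => ⟨hsubN T hT h, h⟩, fun h => h.2⟩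
          _ = ∑ T' ∈ N, ∑ T ∈ A, if T' ∈ r T then 1 else 0 := Finset.sum_comm
          _ = ∑ T' ∈ N, (A.filter fun T => T' ∈ r T).card := by
              refine Finset.sum_congr rfl fun T' _ => ?_
              rw [Finset.card_filter]
      have h3 : ∑ T' ∈ N, (A.filter fun T => T' ∈ r T).card ≤ N.card * D := by
        calc ∑ T' ∈ N, (A.filter fun T => T' ∈ r T).card
            ≤ ∑ _T' ∈ N, D := Finset.sum_le_sum hfib
          _ = N.card * D := by rw [Finset.sum_const, smul_eq_mul]
      omega
    exact Nat.le_of_mul_le_mul_right hdouble hDpos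
  obtain ⟨f, hfinj, hfmem⟩ := (Finset.all_card_le_biUnion_card_iff_exists_injective r).mp hall
  have hfpc : ∀ x, f x ∈ B.powersetCard n := fun x => (mem_filter.mp (hfmem x)).1
  have hfdisj : ∀ x, Disjoint x.1 (f x) := fun x => (mem_filter.mp (hfmem x)).2
  set g : {x // x ∈ B.powersetCard n} → {x // x ∈ B.powersetCard n} :=
    fun x => ⟨f x, hfpc x⟩ with hg
  have hginj : Function.Injective g := fun x y hxy =>
    hfinj (congrArg Subtype.val hxy)
  have hgsurj : Function.Surjective g := Finite.surjective_of_injective hginj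
  refine ⟨fun T => if h : T ∈ B.powersetCard n then f ⟨T, h⟩ else ∅, ?_, ?_, ?_⟩
  · intro T hT
    dsimp only
    rw [dif_pos hT]
    exact ⟨hfpc ⟨T, hT⟩, hfdisj ⟨T, hT⟩⟩
  · intro T₁ h₁ T₂ h₂ heq
    dsimp only at heq
    rw [dif_pos h₁, dif_pos h₂] at heq
    have := hfinj heq
    exact congrArg Subtype.val this
  · intro T' hT'
    obtain ⟨x, hx⟩ := hgsurj ⟨T', hT'⟩
    refine ⟨x.1, x.2, ?_⟩
    dsimp only
    rw [dif_pos x.2]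
    have : f x = T' := congrArg Subtype.val hx
    simpa using this

/-- Steiner-system construction (`t ≤ k/2 + 1`), parameter set 3: a `t`-`(v,k,1)`
design with `t ≤ k/2 + 1` and `t/2 ≤ t0 ≤ t - 1` yields a PDA with
`K = b = C(v,t)/C(k,t)`, `F = C(v,t0)`, `Q = C(v,t0) - C(k,t0)`, `S = C(v,t0)`. -/
theorem exists_pda_of_steiner_small_t_three {V : Type} [Fintype V] [DecidableEq V]
    (B : Finset (Finset V)) (t v k t0 : ℕ) (ht : 0 < t) (htk : t ≤ k) (hkv : k < v)
    (hdes : IsSteinerSystem B t v k)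
    (ht2 : 2 * t ≤ k + 2) (ht0 : 0 < t0) (ht0l : t ≤ 2 * t0) (ht0u : t0 ≤ t - 1) :
    ExistsPDA (Nat.choose v t / Nat.choose k t) (Nat.choose v t0)
      (Nat.choose v t0 - Nat.choose k t0) (Nat.choose v t0) := by
  classical
  obtain ⟨hcV, hbk, huniq⟩ := hdes
  have htv : t ≤ v := le_of_lt (lt_of_le_of_lt htk hkv)
  have ht0t : t0 ≤ t := by omega
  -- number of blocks
  have hcount : v.choose t = B.card * k.choose t := by
    have hPu : ((univ : Finset V).powersetCard t).card = v.choose t := by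
      rw [card_powersetCard, card_univ, hcV]
    calc v.choose t
        = ∑ T ∈ (univ : Finset V).powersetCard t, (B.filter fun blk => T ⊆ blk).card := by
          rw [Finset.sum_congr rfl fun T hT => huniq T (mem_powersetCard.mp hT).2,
            Finset.sum_const, smul_eq_mul, mul_one, hPu]
      _ = ∑ T ∈ (univ : Finset V).powersetCard t, ∑ blk ∈ B, if T ⊆ blk then 1 else 0 := by
          refine Finset.sum_congr rfl fun T _ => ?_
          rw [Finset.card_filter]
      _ = ∑ blk ∈ B, ∑ T ∈ (univ : Finset V).powersetCard t, if T ⊆ blk then 1 else 0 :=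
          Finset.sum_comm
      _ = ∑ blk ∈ B, ((univ : Finset V).powersetCard t |>.filter fun T => T ⊆ blk).card := by
          refine Finset.sum_congr rfl fun blk _ => ?_
          rw [Finset.card_filter]
      _ = ∑ blk ∈ B, k.choose t := by
          refine Finset.sum_congr rfl fun blk hblk => ?_
          have : ((univ : Finset V).powersetCard t).filter (fun T => T ⊆ blk)
              = blk.powersetCard t := by
            ext T
            simp only [mem_filter, mem_powersetCard, subset_univ, true_and]
            tauto
          rw [this, card_powersetCard, hbk blk hblk]
      _ = B.card * k.choose t := by rw [Finset.sum_const, smul_eq_mul]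
  have hKcard : B.card = v.choose t / k.choose t := by
    rw [hcount, Nat.mul_div_cancel _ (Nat.choose_pos htk)]
  -- equivalences
  have eK : Fin (v.choose t / k.choose t) ≃ {blk : Finset V // blk ∈ B} :=
    (Fintype.equivFinOfCardEq (by rw [Fintype.card_coe, hKcard])).symm
  have eF : Fin (v.choose t0) ≃ {T : Finset V // T.card = t0} :=
    (Fintype.equivFinOfCardEq (by rw [Fintype.card_finset_len, hcV])).symm
  -- per-block disjoint permutations
  have hperm : ∀ blk : {blk : Finset V // blk ∈ B},
      ∃ σ : Finset V → Finset V,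
        (∀ T ∈ blk.1.powersetCard t0, σ T ∈ blk.1.powersetCard t0 ∧ Disjoint T (σ T)) ∧
        (∀ T₁ ∈ blk.1.powersetCard t0, ∀ T₂ ∈ blk.1.powersetCard t0, σ T₁ = σ T₂ → T₁ = T₂) ∧
        (∀ T' ∈ blk.1.powersetCard t0, ∃ T ∈ blk.1.powersetCard t0, σ T = T') :=
    fun blk => aux_perm blk.1 t0 (by rw [hbk blk.1 blk.2]; omega)
  choose σ hσ1 hσ2 hσ3 using hperm
  have memPC : ∀ (blk : {blk : Finset V // blk ∈ B}) (T : Finset V),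
      T.card = t0 → T ⊆ blk.1 → T ∈ blk.1.powersetCard t0 :=
    fun _ _ h1 h2 => mem_powersetCard.mpr ⟨h2, h1⟩
  have hcard : ∀ (blk : {blk : Finset V // blk ∈ B}) (T : Finset V),
      T.card = t0 → T ⊆ blk.1 → (σ blk T).card = t0 := fun blk T h1 h2 =>
    (mem_powersetCard.mp (hσ1 blk T (memPC blk T h1 h2)).1).2
  have hσsub : ∀ (blk : {blk : Finset V // blk ∈ B}) (T : Finset V),
      T.card = t0 → T ⊆ blk.1 → σ blk T ⊆ blk.1 := fun blk T h1 h2 =>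
    (mem_powersetCard.mp (hσ1 blk T (memPC blk T h1 h2)).1).1
  have hσdisj : ∀ (blk : {blk : Finset V // blk ∈ B}) (T : Finset V),
      T.card = t0 → T ⊆ blk.1 → Disjoint T (σ blk T) := fun blk T h1 h2 =>
    (hσ1 blk T (memPC blk T h1 h2)).2
  -- the PDA
  let P : Fin (v.choose t0) → Fin (v.choose t / k.choose t) → Option (Fin (v.choose t0)) :=
    fun j c =>
      if h : (eF j).1 ⊆ (eK c).1 then
        some (eF.symm ⟨σ (eK c) (eF j).1, hcard (eK c) (eF j).1 (eF j).2 h⟩)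
      else none
  have hPpos : ∀ j c (h : (eF j).1 ⊆ (eK c).1),
      P j c = some (eF.symm ⟨σ (eK c) (eF j).1, hcard (eK c) (eF j).1 (eF j).2 h⟩) :=
    fun j c h => dif_pos h
  have hPneg : ∀ j c, ¬ (eF j).1 ⊆ (eK c).1 → P j c = none := fun j c h => dif_neg h
  have hPsome : ∀ j c s, P j c = some s →
      (eF j).1 ⊆ (eK c).1 ∧ (eF s).1 = σ (eK c) (eF j).1 := by
    intro j c s h
    by_cases hss : (eF j).1 ⊆ (eK c).1
    · refine ⟨hss, ?_⟩
      rw [hPpos j c hss] at h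
      have h2 := Option.some.inj h
      rw [← h2, Equiv.apply_symm_apply]
    · rw [hPneg j c hss] at h; exact absurd h (by simp)
  -- uniqueness of blocks containing a t-set
  have hUniq : ∀ (W : Finset V) (b₁ b₂ : {blk : Finset V // blk ∈ B}),
      t ≤ W.card → W ⊆ b₁.1 → W ⊆ b₂.1 → b₁ = b₂ := by
    intro W b₁ b₂ hW h1 h2
    obtain ⟨T, hTW, hTc⟩ := Finset.exists_subset_card_eq hW
    have := huniq T hTc
    rw [Finset.card_eq_one] at this
    obtain ⟨x, hx⟩ := this
    have m1 : b₁.1 ∈ B.filter fun blk => T ⊆ blk :=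
      mem_filter.mpr ⟨b₁.2, hTW.trans h1⟩
    have m2 : b₂.1 ∈ B.filter fun blk => T ⊆ blk :=
      mem_filter.mpr ⟨b₂.2, hTW.trans h2⟩
    rw [hx, mem_singleton] at m1 m2
    exact Subtype.ext (m1.trans m2.symm)
  refine ⟨P, ?_, ?_, ?_⟩
  · -- C1
    intro c
    have hfe : (univ.filter fun j => P j c = none)
        = univ.filter fun j => ¬ (eF j).1 ⊆ (eK c).1 := by
      refine filter_congr fun j _ => ?_
      by_cases h : (eF j).1 ⊆ (eK c).1
      · rw [hPpos j c h]; simp [h]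
      · rw [hPneg j c h]; simp [h]
    rw [hfe]
    have hcardeq : (univ.filter fun j => ¬ (eF j).1 ⊆ (eK c).1).card
        = (univ.filter fun T : {T : Finset V // T.card = t0} => ¬ T.1 ⊆ (eK c).1).card := by
      refine Finset.card_equiv eF fun j => ?_
      simp
    rw [hcardeq, Finset.filter_not, card_sdiff_of_subset (filter_subset _ _), card_univ,
      Fintype.card_finset_len, hcV]
    congr 1
    calc (univ.filter fun T : {T : Finset V // T.card = t0} => T.1 ⊆ (eK c).1).card
        = ((eK c).1.powersetCard t0).card := by
          refine Finset.card_nbij (fun T => T.1) ?_ ?_ ?_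
          · intro T hT
            exact mem_powersetCard.mpr ⟨(mem_filter.mp hT).2, T.2⟩
          · intro x _ y _ hxy; exact Subtype.ext hxy
          · intro T' hT'
            simp only [Finset.coe_filter, Set.mem_setOf_eq] at *
            obtain ⟨hsub, hcard'⟩ := mem_powersetCard.mp hT'
            exact ⟨⟨T', hcard'⟩, by simp [hsub], rfl⟩
      _ = k.choose t0 := by rw [card_powersetCard, hbk (eK c).1 (eK c).2]
  · -- C2
    intro s
    obtain ⟨W, hTW, _, hWcard⟩ :=
      Finset.exists_subsuperset_card_eq (n := t) (Finset.subset_univ (eF s).1)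
        (by rw [(eF s).2]; omega) (by rw [card_univ, hcV]; exact htv)
    have h1 := huniq W hWcard
    rw [Finset.card_eq_one] at h1
    obtain ⟨blk, hblk⟩ := h1
    have hblkmem : blk ∈ B.filter fun b => W ⊆ b := by rw [hblk]; exact mem_singleton_self _
    obtain ⟨hblkB, hWblk⟩ := mem_filter.mp hblkmem
    have hTblk : (eF s).1 ⊆ blk := hTW.trans hWblk
    obtain ⟨T, hTpc, hTσ⟩ := hσ3 ⟨blk, hblkB⟩ (eF s).1 (memPC ⟨blk, hblkB⟩ _ (eF s).2 hTblk)
    obtain ⟨hTsub, hTcard⟩ := mem_powersetCard.mp hTpc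
    refine ⟨eF.symm ⟨T, hTcard⟩, eK.symm ⟨blk, hblkB⟩, ?_⟩
    have hj : (eF (eF.symm ⟨T, hTcard⟩)).1 = T := by rw [Equiv.apply_symm_apply]
    have hc : eK (eK.symm ⟨blk, hblkB⟩) = ⟨blk, hblkB⟩ := Equiv.apply_symm_apply _ _
    have hsub : (eF (eF.symm ⟨T, hTcard⟩)).1 ⊆ (eK (eK.symm ⟨blk, hblkB⟩)).1 := by
      rw [hj, hc]; exact hTsub
    rw [hPpos _ _ hsub]
    congr 1
    rw [Equiv.symm_apply_eq]
    refine Subtype.ext ?_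
    show σ (eK (eK.symm ⟨blk, hblkB⟩)) (eF (eF.symm ⟨T, hTcard⟩)).1 = (eF s).1
    rw [hj, hc, hTσ]
  · -- C3
    intro j₁ j₂ c₁ c₂ s hne h1 h2
    obtain ⟨hs1, he1⟩ := hPsome _ _ _ h1
    obtain ⟨hs2, he2⟩ := hPsome _ _ _ h2
    have hW1 : (eF s).1 ⊆ (eK c₁).1 := by
      rw [he1]; exact hσsub (eK c₁) (eF j₁).1 (eF j₁).2 hs1
    have hW2 : (eF s).1 ⊆ (eK c₂).1 := by
      rw [he2]; exact hσsub (eK c₂) (eF j₂).1 (eF j₂).2 hs2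
    have hd1 : Disjoint (eF j₁).1 (eF s).1 := by
      rw [he1]; exact hσdisj (eK c₁) (eF j₁).1 (eF j₁).2 hs1
    have hd2 : Disjoint (eF j₂).1 (eF s).1 := by
      rw [he2]; exact hσdisj (eK c₂) (eF j₂).1 (eF j₂).2 hs2
    have hBne : eK c₁ ≠ eK c₂ := by
      intro heq
      have hmem2 : (eF j₂).1 ⊆ (eK c₁).1 := by rw [heq]; exact hs2
      have hσeq : σ (eK c₁) (eF j₁).1 = σ (eK c₁) (eF j₂).1 := by
        rw [← he1, he2, heq]
      have hT12 : (eF j₁).1 = (eF j₂).1 :=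
        hσ2 (eK c₁) _ (memPC _ _ (eF j₁).2 hs1) _ (memPC _ _ (eF j₂).2 hmem2) hσeq
      have hj12 : j₁ = j₂ := eF.injective (Subtype.ext hT12)
      have hc12 : c₁ = c₂ := eK.injective heq
      exact hne (by rw [hj12, hc12])
    have hcard_union : ∀ (j : Fin (v.choose t0)), Disjoint (eF j).1 (eF s).1 →
        t ≤ ((eF j).1 ∪ (eF s).1).card := by
      intro j hd
      rw [Finset.card_union_of_disjoint hd, (eF j).2, (eF s).2]
      omega
    have hnsub12 : ¬ (eF j₁).1 ⊆ (eK c₂).1 := by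
      intro hsub
      apply hBne
      refine hUniq ((eF j₁).1 ∪ (eF s).1) (eK c₁) (eK c₂) (hcard_union j₁ hd1) ?_ ?_
      · exact Finset.union_subset hs1 hW1
      · exact Finset.union_subset hsub hW2
    have hnsub21 : ¬ (eF j₂).1 ⊆ (eK c₁).1 := by
      intro hsub
      apply hBne
      refine hUniq ((eF j₂).1 ∪ (eF s).1) (eK c₁) (eK c₂) (hcard_union j₂ hd2) ?_ ?_
      · exact Finset.union_subset hsub hW1
      · exact Finset.union_subset hs2 hW2
    refine ⟨?_, ?_, hPneg _ _ hnsub12, hPneg _ _ hnsub21⟩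
    · intro hj
      exact hnsub12 (by rw [hj]; exact hs2)
    · intro hc
      exact hBne (by rw [hc])
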